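/- Let Γ be a valued constraint language over a finite set D that contains every unary cost function D → ℚ ∪ {∞}, and suppose Pol⁺(Γ) contains an idempotent cyclic operation. Then for every two-element subset {x,y} ⊆ D there exists no binary cost function ϱ ∈ wRelClo(Γ) such that (x,y), (y,x) ∈ Feas(ϱ), ϱ(x,x) + ϱ(y,y) > ϱ(x,y) + ϱ(y,x), and at least one of the pairs (x,x), (y,y) belongs to Feas(ϱ). -/

import Mathlib

/-! Basic framework for Valued Constraint Satisfaction Problems (VCSP):
operations, clones, weightings, weighted clones, cost functions,
(weighted/fractional) polymorphisms, expressibility and weighted relational clones. -/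

/-- A `k`-ary operation on `D`. -/
abbrev Op (D : Type) (k : ℕ) : Type := (Fin k → D) → D

/-- The `i`-th `k`-ary projection on `D`. -/
def proj (D : Type) {k : ℕ} (i : Fin k) : Op D k := fun x => x i

/-- An operation is a projection. -/
def IsProj {D : Type} {k : ℕ} (f : Op D k) : Prop := ∃ i : Fin k, f = proj D i

/-- Superposition `f[g₁,…,g_k]` of a `k`-ary operation with `k` many `l`-ary operations. -/
def superposeOp {D : Type} {k l : ℕ} (f : Op D k) (g : Fin k → Op D l) : Op D l :=
  fun x => f fun i => g i x

/-- A clone of operations on `D`: contains all projections and is closed under superposition. -/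
structure IsClone {D : Type} (C : ∀ k, Set (Op D k)) : Prop where
  proj_mem : ∀ (k : ℕ) (i : Fin k), proj D i ∈ C k
  superpose_mem : ∀ (k l : ℕ) (f : Op D k) (g : Fin k → Op D l),
    f ∈ C k → (∀ i, g i ∈ C l) → superposeOp f g ∈ C l

/-- A `k`-ary weighting of the clone `C`: a rational-valued function on `k`-ary operations,
vanishing outside `C`, summing to `0`, and negative only on projections. -/
structure IsWeighting {D : Type} [Fintype D] [DecidableEq D] (C : ∀ k, Set (Op D k))
    {k : ℕ} (ω : Op D k → ℚ) : Prop where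
  support_mem : ∀ f : Op D k, ω f ≠ 0 → f ∈ C k
  sum_zero : ∑ f : Op D k, ω f = 0
  neg_imp_proj : ∀ f : Op D k, ω f < 0 → IsProj f

/-- Superposition of a `k`-ary weighting with `k` many `l`-ary operations. -/
def wSuperpose {D : Type} [Fintype D] [DecidableEq D] {k l : ℕ}
    (ω : Op D k → ℚ) (g : Fin k → Op D l) : Op D l → ℚ :=
  fun f' => ∑ f ∈ Finset.univ.filter (fun f : Op D k => superposeOp f g = f'), ω f

/-- A weighted clone over the clone `C`: a nonempty family of weightings of `C` closed under
non-negative scaling, addition of weightings of equal arity and proper superposition. -/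
structure IsWeightedClone {D : Type} [Fintype D] [DecidableEq D]
    (C : ∀ k, Set (Op D k)) (W : ∀ k, Set (Op D k → ℚ)) : Prop where
  clone : IsClone C
  weighting : ∀ (k : ℕ), ∀ ω ∈ W k, IsWeighting C ω
  nonempty : ∃ k, (W k).Nonempty
  scale_mem : ∀ (k : ℕ) (c : ℚ), 0 ≤ c → ∀ ω ∈ W k, (fun f => c * ω f) ∈ W k
  add_mem : ∀ (k : ℕ), ∀ ω₁ ∈ W k, ∀ ω₂ ∈ W k, (fun f => ω₁ f + ω₂ f) ∈ W k
  superpose_mem : ∀ (k l : ℕ), ∀ ω ∈ W k, ∀ g : Fin k → Op D l,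
    (∀ i, g i ∈ C l) → IsWeighting C (wSuperpose ω g) → wSuperpose ω g ∈ W l

/-- The positive clone of a family of weightings: all projections together with all operations
receiving positive weight from some weighting in the family. -/
def posClone {D : Type} [Fintype D] [DecidableEq D] (W : ∀ k, Set (Op D k → ℚ)) :
    ∀ k, Set (Op D k) :=
  fun k => {f | IsProj f ∨ ∃ ω ∈ W k, 0 < ω f}

/-- An `r`-ary cost function on `D`, with values in `ℚ ∪ {∞}`. -/
abbrev CostF (D : Type) (r : ℕ) : Type := (Fin r → D) → WithTop ℚ

/-- The feasibility relation of a cost function. -/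
def Feas {D : Type} {r : ℕ} (ϱ : CostF D r) : Set (Fin r → D) := {x | ϱ x ≠ ⊤}

/-- Coordinate-wise application of a `k`-ary operation to `k` many `r`-tuples. -/
def appRows {D : Type} {k r : ℕ} (f : Op D k) (xs : Fin k → Fin r → D) : Fin r → D :=
  fun j => f fun i => xs i j

/-- `f` is a polymorphism of `ϱ`: `Feas ϱ` is closed under coordinate-wise application of `f`. -/
def IsPolymorphism {D : Type} {k r : ℕ} (f : Op D k) (ϱ : CostF D r) : Prop :=
  ∀ xs : Fin k → Fin r → D, (∀ i, xs i ∈ Feas ϱ) → appRows f xs ∈ Feas ϱ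

/-- A valued constraint language on `D`: a set of cost functions of various arities. -/
abbrev VLang (D : Type) : Type := Set (Σ r : ℕ, CostF D r)

/-- The clone of polymorphisms of a language. -/
def Pol {D : Type} (Γ : VLang D) : ∀ k, Set (Op D k) :=
  fun _ => {f | ∀ ϱ ∈ Γ, IsPolymorphism f ϱ.2}

/-- Multiplication of an element of `ℚ ∪ {∞}` by a rational scalar (`c·∞ = ∞`). -/
def qmul (c : ℚ) (x : WithTop ℚ) : WithTop ℚ := WithTop.map (fun q => c * q) x

/-- The sum `∑_f ω(f)·ϱ(f(x₁,…,x_k))`, over operations with non-zero weight. -/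
def wSum {D : Type} [Fintype D] [DecidableEq D] {k r : ℕ}
    (ω : Op D k → ℚ) (ϱ : CostF D r) (xs : Fin k → Fin r → D) : WithTop ℚ :=
  ∑ f ∈ Finset.univ.filter (fun f : Op D k => ω f ≠ 0), qmul (ω f) (ϱ (appRows f xs))

/-- `ω` is a weighted polymorphism of the language `Γ`. -/
def IsWeightedPolymorphism {D : Type} [Fintype D] [DecidableEq D] (Γ : VLang D)
    {k : ℕ} (ω : Op D k → ℚ) : Prop :=
  IsWeighting (Pol Γ) ω ∧
    ∀ ϱ ∈ Γ, ∀ xs : Fin k → Fin ϱ.1 → D, (∀ i, xs i ∈ Feas ϱ.2) → wSum ω ϱ.2 xs ≤ 0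

/-- The weighted polymorphisms of a language. -/
def wPol {D : Type} [Fintype D] [DecidableEq D] (Γ : VLang D) :
    ∀ k, Set (Op D k → ℚ) :=
  fun _ => {ω | IsWeightedPolymorphism Γ ω}

/-- The positive clone `Pol⁺(Γ)` of a language. -/
def PolPlus {D : Type} [Fintype D] [DecidableEq D] (Γ : VLang D) : ∀ k, Set (Op D k) :=
  posClone (wPol Γ)

/-- The map `D → D` induced by a unary operation. -/
def unaryFun {D : Type} (f : Op D 1) : D → D := fun x => f fun _ => x

/-- A language is a core if every unary operation in its positive clone is bijective. -/
def IsCore {D : Type} [Fintype D] [DecidableEq D] (Γ : VLang D) : Prop :=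
  ∀ f ∈ PolPlus Γ 1, Function.Bijective (unaryFun f)

/-- An idempotent operation. -/
def Idem {D : Type} {k : ℕ} (f : Op D k) : Prop := ∀ x : D, (f fun _ => x) = x

/-- A cyclic operation: `f(x₁,…,x_k) = f(x₂,…,x_k,x₁)`. -/
def CyclicOp {D : Type} {k : ℕ} (f : Op D k) : Prop :=
  ∀ x : Fin k → D, f x = f (x ∘ ⇑(finRotate k))

/-- A conservative operation. -/
def Conservative {D : Type} {k : ℕ} (f : Op D k) : Prop :=
  ∀ x : Fin k → D, ∃ i, f x = x i

/-- A Taylor operation. -/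
def IsTaylor {D : Type} {k : ℕ} (t : Op D k) : Prop :=
  Idem t ∧ ∀ j : Fin k, ∃ a b : Fin k → Fin 2, a j = 0 ∧ b j = 1 ∧
    ∀ u : Fin 2 → D, (t fun i => u (a i)) = t fun i => u (b i)

/-- An instance of `VCSP(Γ)` with variable set `V`: a finite multiset of constraints,
each a tuple of variables together with a cost function from `Γ`. -/
structure VInstance (D : Type) (Γ : VLang D) (V : Type) where
  cons : Multiset (Σ r : ℕ, (Fin r → V) × CostF D r)
  mem_lang : ∀ c ∈ cons, (⟨c.1, c.2.2⟩ : Σ r : ℕ, CostF D r) ∈ Γ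

/-- The cost of an assignment for a VCSP instance. -/
def VInstance.cost {D V : Type} {Γ : VLang D} (I : VInstance D Γ V) (s : V → D) :
    WithTop ℚ :=
  (I.cons.map fun c => c.2.2 fun i => s (c.2.1 i)).sum

/-- A cost function is expressible over a language `Δ`. -/
def Expressible {D : Type} [Fintype D] [DecidableEq D] (Δ : VLang D) {r : ℕ}
    (ϱ : CostF D r) : Prop :=
  ∃ (n : ℕ) (I : VInstance D Δ (Fin n)) (v : Fin r → Fin n),
    ∀ x : Fin r → D,
      ϱ x = (Finset.univ.filter fun s : Fin n → D => ∀ i, s (v i) = x i).inf fun s => I.cost s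

/-- A language is closed under expressibility, non-negative scaling and
addition of rational constants. -/
def IsWClosed {D : Type} [Fintype D] [DecidableEq D] (Δ : VLang D) : Prop :=
  (∀ (r : ℕ) (ϱ : CostF D r), Expressible Δ ϱ → (⟨r, ϱ⟩ : Σ r : ℕ, CostF D r) ∈ Δ) ∧
  (∀ (r : ℕ) (ϱ : CostF D r) (c : ℚ), 0 ≤ c → (⟨r, ϱ⟩ : Σ r : ℕ, CostF D r) ∈ Δ →
    (⟨r, fun x => qmul c (ϱ x)⟩ : Σ r : ℕ, CostF D r) ∈ Δ) ∧
  (∀ (r : ℕ) (ϱ : CostF D r) (c : ℚ), (⟨r, ϱ⟩ : Σ r : ℕ, CostF D r) ∈ Δ →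
    (⟨r, fun x => ϱ x + (c : WithTop ℚ)⟩ : Σ r : ℕ, CostF D r) ∈ Δ)

/-- The weighted relational clone generated by `Γ`: the smallest language containing `Γ`
closed under expressibility, non-negative scaling and addition of rational constants. -/
def wRelClo {D : Type} [Fintype D] [DecidableEq D] (Γ : VLang D) : VLang D :=
  ⋂₀ {Δ : VLang D | Γ ⊆ Δ ∧ IsWClosed Δ}

/-- The weighting `(1/k)(∑_i 1_{f_i} − ∑_i 1_{π_i})` associated with a `k`-tuple of
`k`-ary operations (a multimorphism), weights added with multiplicity. -/
def multimorphismW {D : Type} [Fintype D] [DecidableEq D] {k : ℕ} (F : Fin k → Op D k) :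
    Op D k → ℚ :=
  fun g => (1 / (k : ℚ)) *
    (((Finset.univ.filter fun i : Fin k => F i = g).card : ℚ) -
     ((Finset.univ.filter fun i : Fin k => proj D i = g).card : ℚ))

/-- `Γ` admits the multimorphism `⟨F 0, …, F (k-1)⟩`. -/
def AdmitsMultimorphism {D : Type} [Fintype D] [DecidableEq D] {k : ℕ}
    (Γ : VLang D) (F : Fin k → Op D k) : Prop :=
  multimorphismW F ∈ wPol Γ k

/-- An `m`-ary fractional operation: a probability distribution on `m`-ary operations. -/
def IsFracOp {D : Type} [Fintype D] [DecidableEq D] {m : ℕ} (ω : Op D m → ℝ) : Prop :=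
  (∀ f, 0 ≤ ω f) ∧ ∑ f : Op D m, ω f = 1

/-- Multiplication of an element of `ℚ ∪ {∞}` by a real scalar, landing in `ℝ ∪ {∞}`. -/
def rmul (c : ℝ) (x : WithTop ℚ) : WithTop ℝ := WithTop.map (fun q : ℚ => c * (q : ℝ)) x

/-- `ω` is a fractional polymorphism of the language `Γ`. -/
def IsFracPolymorphism {D : Type} [Fintype D] [DecidableEq D] (Γ : VLang D) {m : ℕ}
    (ω : Op D m → ℝ) : Prop :=
  IsFracOp ω ∧ ∀ ϱ ∈ Γ, ∀ xs : Fin m → Fin ϱ.1 → D, (∀ i, xs i ∈ Feas ϱ.2) →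
    (∑ g ∈ Finset.univ.filter fun g : Op D m => 0 < ω g, rmul (ω g) (ϱ.2 (appRows g xs)))
      ≤ rmul (1 / (m : ℝ)) (∑ i : Fin m, ϱ.2 (xs i))

/-- The positive clone `fPol⁺(Γ)` defined via fractional polymorphisms. -/
def fPolPlus {D : Type} [Fintype D] [DecidableEq D] (Γ : VLang D) : ∀ k, Set (Op D k) :=
  fun k => {f | IsProj f ∨ ∃ ω : Op D k → ℝ, IsFracPolymorphism Γ ω ∧ 0 < ω f}

/-- Application of a binary operation to two elements. -/
def ap2 {D : Type} (f : Op D 2) (a b : D) : D := f ![a, b]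

/-- Application of a ternary operation to three elements. -/
def ap3 {D : Type} (f : Op D 3) (a b c : D) : D := f ![a, b, c]

/-- A ternary operation restricts to a majority operation on a subset `S`. -/
def IsMajorityOn {D : Type} (f : Op D 3) (S : Set D) : Prop :=
  ∀ x ∈ S, ∀ y ∈ S, ap3 f x x y = x ∧ ap3 f x y x = x ∧ ap3 f y x x = x

/-- A ternary operation restricts to a minority operation on a subset `S`. -/
def IsMinorityOn {D : Type} (f : Op D 3) (S : Set D) : Prop :=
  ∀ x ∈ S, ∀ y ∈ S, ap3 f x x y = y ∧ ap3 f x y x = y ∧ ap3 f y x x = y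

/-- The language `Γ_c`: `Γ` together with all unary cost functions `N_a`
(`N_a(a) = 0`, `N_a(x) = ∞` for `x ≠ a`). -/
def withConstants {D : Type} [DecidableEq D] (Γ : VLang D) : VLang D :=
  Γ ∪ {p : Σ r : ℕ, CostF D r |
        ∃ a : D, p = ⟨1, fun x => if x 0 = a then (0 : WithTop ℚ) else ⊤⟩}

/-- A language is conservative if it contains every `{0,1}`-valued unary cost function. -/
def ConservativeLang {D : Type} (Γ : VLang D) : Prop :=
  ∀ ϱ : CostF D 1, (∀ x, ϱ x = 0 ∨ ϱ x = 1) → (⟨1, ϱ⟩ : Σ r : ℕ, CostF D r) ∈ Γ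

/-- The coordinate-wise action of a `k`-ary operation on `A` on the power `A^n`. -/
def opPow {A : Type} (n : ℕ) {k : ℕ} (f : Op A k) : Op (Fin n → A) k :=
  fun xs c => f fun i => xs i c

/-- Regrouping an `(n·r)`-tuple over `A` into an `r`-tuple of elements of `A^n`. -/
def regroup (A : Type) (n r : ℕ) (y : Fin (n * r) → A) : Fin r → Fin n → A :=
  fun j c => y (finProdFinEquiv (c, j))


/-! ### Auxiliary material for the proof of Statement 11 -/

section Statement11Aux

open Finset

set_option linter.unusedSectionVars false

variable {D : Type} [Fintype D] [DecidableEq D]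

private lemma coe_untop'_eq {q : WithTop ℚ} (h : q ≠ ⊤) :
    ((q.untopD 0 : ℚ) : WithTop ℚ) = q := by
  cases q with
  | top => exact absurd rfl h
  | coe a => rfl

private lemma multiset_sum_ne_top {m : Multiset (WithTop ℚ)} (h : ∀ a ∈ m, a ≠ ⊤) :
    m.sum ≠ ⊤ := by
  induction m using Multiset.induction with
  | empty => simp
  | cons a s ih =>
    rw [Multiset.sum_cons]
    intro htop
    rcases WithTop.add_eq_top.mp htop with h1 | h1
    · exact h a (Multiset.mem_cons_self a s) h1
    · exact ih (fun b hb => h b (Multiset.mem_cons_of_mem hb)) h1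

private lemma mem_of_sum_ne_top {m : Multiset (WithTop ℚ)} (h : m.sum ≠ ⊤) :
    ∀ a ∈ m, a ≠ ⊤ := by
  induction m using Multiset.induction with
  | empty => simp
  | cons a s ih =>
    rw [Multiset.sum_cons] at h
    intro b hb
    rcases Multiset.mem_cons.mp hb with rfl | hb'
    · intro hbt; exact h (by rw [hbt, top_add])
    · exact ih (fun ht => h (by rw [ht, add_top])) b hb'

private lemma multiset_sum_nonpos {m : Multiset (WithTop ℚ)} (h : ∀ a ∈ m, a ≤ 0) :
    m.sum ≤ 0 := by
  induction m using Multiset.induction with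
  | empty => simp
  | cons a s ih =>
    rw [Multiset.sum_cons]
    have := add_le_add (h a (Multiset.mem_cons_self a s))
      (ih (fun b hb => h b (Multiset.mem_cons_of_mem hb)))
    simpa using this

private lemma qmul_coe' (c q : ℚ) : qmul c (q : WithTop ℚ) = ((c * q : ℚ) : WithTop ℚ) := rfl

private lemma qmul_top' (c : ℚ) : qmul c (⊤ : WithTop ℚ) = ⊤ := rfl

private lemma qmul_eq_top {c : ℚ} {q : WithTop ℚ} : qmul c q = ⊤ ↔ q = ⊤ := by
  cases q with
  | top => simp [qmul_top']
  | coe a =>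
    constructor
    · intro H; exact absurd H (by rw [qmul_coe']; exact WithTop.coe_ne_top)
    · intro H; exact absurd H WithTop.coe_ne_top

private lemma qmul_zero' (c : ℚ) : qmul c (0 : WithTop ℚ) = 0 := by
  have : (0 : WithTop ℚ) = ((0 : ℚ) : WithTop ℚ) := rfl
  rw [this, qmul_coe', mul_zero]

private lemma qmul_add' (c : ℚ) (a b : WithTop ℚ) :
    qmul c (a + b) = qmul c a + qmul c b := by
  cases a with
  | top => simp [qmul_top', top_add]
  | coe qa =>
    cases b with
    | top => simp [qmul_top', add_top]
    | coe qb =>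
      rw [← WithTop.coe_add, qmul_coe', qmul_coe', qmul_coe', ← WithTop.coe_add, mul_add]

private lemma qmul_mono {c : ℚ} (hc : 0 ≤ c) {a b : WithTop ℚ} (h : a ≤ b) :
    qmul c a ≤ qmul c b := by
  cases b with
  | top => simp [qmul_top']
  | coe qb =>
    cases a with
    | top => exact absurd h (by simp)
    | coe qa =>
      rw [qmul_coe', qmul_coe', WithTop.coe_le_coe]
      exact mul_le_mul_of_nonneg_left (WithTop.coe_le_coe.mp h) hc

private lemma qmul_multiset_sum (c : ℚ) (m : Multiset (WithTop ℚ)) :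
    qmul c m.sum = (m.map (qmul c)).sum := by
  induction m using Multiset.induction with
  | empty => simp [qmul_zero']
  | cons a s ih => rw [Multiset.sum_cons, qmul_add', Multiset.map_cons, Multiset.sum_cons, ih]

private lemma sum_multiset_swap {α β : Type} (s : Finset β) (m : Multiset α)
    (g : β → α → WithTop ℚ) :
    ∑ h ∈ s, (m.map (g h)).sum = (m.map fun a => ∑ h ∈ s, g h a).sum := by
  induction m using Multiset.induction with
  | empty => simp
  | cons a mm ih =>
    simp only [Multiset.map_cons, Multiset.sum_cons, Finset.sum_add_distrib, ih]

/-- Converting `wSum` to a rational sum when all relevant values are finite. -/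
private lemma wSum_eq_coe {k r : ℕ} (ω : Op D k → ℚ) (ϱ : CostF D r)
    (xs : Fin k → Fin r → D)
    (hfin : ∀ h : Op D k, ω h ≠ 0 → ϱ (appRows h xs) ≠ ⊤) :
    wSum ω ϱ xs = ((∑ h ∈ Finset.univ.filter (fun h : Op D k => ω h ≠ 0),
      ω h * (ϱ (appRows h xs)).untopD 0 : ℚ) : WithTop ℚ) := by
  rw [wSum]
  rw [show ((∑ h ∈ Finset.univ.filter (fun h : Op D k => ω h ≠ 0),
      ω h * (ϱ (appRows h xs)).untopD 0 : ℚ) : WithTop ℚ) =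
      ∑ h ∈ Finset.univ.filter (fun h : Op D k => ω h ≠ 0),
        ((ω h * (ϱ (appRows h xs)).untopD 0 : ℚ) : WithTop ℚ) by exact_mod_cast rfl]
  refine Finset.sum_congr rfl fun h hh => ?_
  have hne := (Finset.mem_filter.mp hh).2
  conv_lhs => rw [← coe_untop'_eq (hfin h hne)]
  rw [qmul_coe']

/-- The set of cost functions for which every operation in the "support" of `ω` is a
polymorphism and for which `ω` improves all feasible tuples. -/
private def GoodSet {k : ℕ} (ω : Op D k → ℚ) : VLang D :=
  {p | (∀ h : Op D k, ω h ≠ 0 → IsPolymorphism h p.2) ∧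
       (∀ xs : Fin k → Fin p.1 → D, (∀ i, xs i ∈ Feas p.2) → wSum ω p.2 xs ≤ 0)}

private lemma good_isWClosed {k : ℕ} (ω : Op D k → ℚ)
    (hsum : ∑ h : Op D k, ω h = 0) (hneg : ∀ h : Op D k, ω h < 0 → IsProj h) :
    IsWClosed (GoodSet (D := D) ω) := by
  classical
  refine ⟨?_, ?_, ?_⟩
  · -- closure under expressibility
    rintro r ϱ ⟨n, I, v, hx⟩
    have key : ∀ x : Fin r → D, ϱ x ≠ ⊤ →
        ∃ s : Fin n → D, (∀ j, s (v j) = x j) ∧ I.cost s = ϱ x := by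
      intro x hxf
      have hne : (Finset.univ.filter fun s : Fin n → D => ∀ j, s (v j) = x j).Nonempty := by
        by_contra hemp
        rw [Finset.not_nonempty_iff_eq_empty] at hemp
        rw [hx x, hemp] at hxf
        exact hxf Finset.inf_empty
      obtain ⟨s, hs, heq⟩ := Finset.exists_mem_eq_inf _ hne (fun s => I.cost s)
      exact ⟨s, (Finset.mem_filter.mp hs).2, by rw [hx x, heq]⟩
    have ub : ∀ (t : Fin n → D) (xa : Fin r → D), (∀ j, t (v j) = xa j) →
        ϱ xa ≤ I.cost t := by
      intro t xa hvt
      rw [hx xa]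
      exact Finset.inf_le (Finset.mem_filter.mpr ⟨Finset.mem_univ _, hvt⟩)
    -- first component: polymorphisms
    have hP1 : ∀ h : Op D k, ω h ≠ 0 → IsPolymorphism h ϱ := by
      intro h hh xs hxs
      choose s hs hcost using fun i => key (xs i) (hxs i)
      have hvt : ∀ j, (fun m => h fun i => s i m) (v j) = appRows h xs j := by
        intro j
        show h (fun i => s i (v j)) = h (fun i => xs i j)
        congr 1
        funext i
        exact hs i j
      have h1 : ϱ (appRows h xs) ≤ I.cost (fun m => h fun i => s i m) := ub _ _ hvt
      have h2 : I.cost (fun m => h fun i => s i m) ≠ ⊤ := by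
        apply multiset_sum_ne_top
        intro a ha
        rw [Multiset.mem_map] at ha
        obtain ⟨c, hc, rfl⟩ := ha
        have hcmem := I.mem_lang c hc
        have hrows : ∀ i, (fun idx => s i (c.2.1 idx)) ∈ Feas c.2.2 := by
          intro i
          have hci : I.cost (s i) ≠ ⊤ := by rw [hcost i]; exact hxs i
          exact mem_of_sum_ne_top hci _ (Multiset.mem_map_of_mem _ hc)
        exact hcmem.1 h hh _ hrows
      intro htop
      rw [htop] at h1
      exact h2 (top_le_iff.mp h1)
    refine ⟨hP1, ?_⟩
    -- second component: the improvement inequality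
    intro xs hxs
    choose s hs hcost using fun i => key (xs i) (hxs i)
    have hvt : ∀ (h : Op D k) (j : Fin r),
        (fun m => h fun i => s i m) (v j) = appRows h xs j := by
      intro h j
      show h (fun i => s i (v j)) = h (fun i => xs i j)
      congr 1
      funext i
      exact hs i j
    have hrowsc : ∀ c ∈ I.cons, ∀ i, (fun idx => s i (c.2.1 idx)) ∈ Feas c.2.2 := by
      intro c hc i
      have hci : I.cost (s i) ≠ ⊤ := by rw [hcost i]; exact hxs i
      exact mem_of_sum_ne_top hci _ (Multiset.mem_map_of_mem _ hc)
    have hstep1 : ∀ h ∈ Finset.univ.filter (fun h : Op D k => ω h ≠ 0),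
        qmul (ω h) (ϱ (appRows h xs)) ≤
          qmul (ω h) (I.cost (fun m => h fun i => s i m)) := by
      intro h hh
      rcases lt_trichotomy (ω h) 0 with hlt | hz | hgt
      · obtain ⟨m, rfl⟩ := hneg h hlt
        refine le_of_eq ?_
        have e1 : ϱ (appRows (proj D m) xs) = ϱ (xs m) := rfl
        have e2 : I.cost (fun m' => proj D m fun i => s i m') = I.cost (s m) := rfl
        rw [e1, e2, hcost m]
      · exact absurd hz (Finset.mem_filter.mp hh).2
      · exact qmul_mono (le_of_lt hgt) (ub _ _ (hvt h))
    have hstep2 : ∑ h ∈ Finset.univ.filter (fun h : Op D k => ω h ≠ 0),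
        qmul (ω h) (I.cost (fun m => h fun i => s i m)) ≤ 0 := by
      have expand : ∀ h : Op D k,
          qmul (ω h) (I.cost (fun m => h fun i => s i m)) =
            (I.cons.map fun c =>
              qmul (ω h) (c.2.2 fun idx => h fun i => s i (c.2.1 idx))).sum := by
        intro h
        rw [VInstance.cost, qmul_multiset_sum, Multiset.map_map]
        rfl
      rw [Finset.sum_congr rfl fun h _ => expand h]
      rw [sum_multiset_swap]
      apply multiset_sum_nonpos
      intro a ha
      rw [Multiset.mem_map] at ha
      obtain ⟨c, hc, rfl⟩ := ha
      have hcmem := I.mem_lang c hc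
      exact hcmem.2 (fun i idx => s i (c.2.1 idx)) (hrowsc c hc)
    calc wSum ω ϱ xs
        ≤ ∑ h ∈ Finset.univ.filter (fun h : Op D k => ω h ≠ 0),
            qmul (ω h) (I.cost (fun m => h fun i => s i m)) :=
          Finset.sum_le_sum hstep1
      _ ≤ 0 := hstep2
  · -- closure under non-negative scaling
    rintro r ϱ cst hcst ⟨hP1, hP2⟩
    have hFeas : ∀ z : Fin r → D, ((fun w => qmul cst (ϱ w)) z ≠ ⊤) ↔ (ϱ z ≠ ⊤) := by
      intro z
      simp only [ne_eq, qmul_eq_top]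
    constructor
    · intro h hh xs hxs
      have hxs' : ∀ i, xs i ∈ Feas ϱ := fun i => (hFeas (xs i)).mp (hxs i)
      exact (hFeas _).mpr (hP1 h hh xs hxs')
    · intro xs hxs
      have hxs' : ∀ i, xs i ∈ Feas ϱ := fun i => (hFeas (xs i)).mp (hxs i)
      have hfin : ∀ h : Op D k, ω h ≠ 0 → ϱ (appRows h xs) ≠ ⊤ :=
        fun h hh => hP1 h hh xs hxs'
      have hfin' : ∀ h : Op D k, ω h ≠ 0 →
          (fun w => qmul cst (ϱ w)) (appRows h xs) ≠ ⊤ :=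
        fun h hh => (hFeas _).mpr (hfin h hh)
      have hval : ∀ h : Op D k, ω h ≠ 0 →
          (((fun w => qmul cst (ϱ w)) (appRows h xs)).untopD 0 : ℚ) =
            cst * (ϱ (appRows h xs)).untopD 0 := by
        intro h hh
        obtain ⟨q, hq⟩ := WithTop.ne_top_iff_exists.mp (hfin h hh)
        rw [show (fun w => qmul cst (ϱ w)) (appRows h xs) = qmul cst (ϱ (appRows h xs)) from rfl,
          ← hq, qmul_coe', WithTop.untopD_coe, WithTop.untopD_coe]
      have hq := hP2 xs hxs'
      rw [wSum_eq_coe ω ϱ xs hfin] at hq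
      rw [show (0 : WithTop ℚ) = ((0 : ℚ) : WithTop ℚ) from rfl, WithTop.coe_le_coe] at hq
      rw [wSum_eq_coe ω _ xs hfin']
      rw [show (0 : WithTop ℚ) = ((0 : ℚ) : WithTop ℚ) from rfl, WithTop.coe_le_coe]
      have : ∑ h ∈ Finset.univ.filter (fun h : Op D k => ω h ≠ 0),
          ω h * ((fun w => qmul cst (ϱ w)) (appRows h xs)).untopD 0 =
          cst * ∑ h ∈ Finset.univ.filter (fun h : Op D k => ω h ≠ 0),
            ω h * (ϱ (appRows h xs)).untopD 0 := by
        rw [Finset.mul_sum]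
        refine Finset.sum_congr rfl fun h hh => ?_
        rw [hval h (Finset.mem_filter.mp hh).2]
        ring
      rw [this]
      exact mul_nonpos_of_nonneg_of_nonpos hcst hq
  · -- closure under adding constants
    rintro r ϱ cst ⟨hP1, hP2⟩
    have hFeas : ∀ z : Fin r → D, ((fun w => ϱ w + (cst : WithTop ℚ)) z ≠ ⊤) ↔ (ϱ z ≠ ⊤) := by
      intro z
      simp only [ne_eq, WithTop.add_eq_top, WithTop.coe_ne_top, or_false]
    constructor
    · intro h hh xs hxs
      have hxs' : ∀ i, xs i ∈ Feas ϱ := fun i => (hFeas (xs i)).mp (hxs i)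
      exact (hFeas _).mpr (hP1 h hh xs hxs')
    · intro xs hxs
      have hxs' : ∀ i, xs i ∈ Feas ϱ := fun i => (hFeas (xs i)).mp (hxs i)
      have hfin : ∀ h : Op D k, ω h ≠ 0 → ϱ (appRows h xs) ≠ ⊤ :=
        fun h hh => hP1 h hh xs hxs'
      have hfin' : ∀ h : Op D k, ω h ≠ 0 →
          (fun w => ϱ w + (cst : WithTop ℚ)) (appRows h xs) ≠ ⊤ :=
        fun h hh => (hFeas _).mpr (hfin h hh)
      have hval : ∀ h : Op D k, ω h ≠ 0 →
          (((fun w => ϱ w + (cst : WithTop ℚ)) (appRows h xs)).untopD 0 : ℚ) =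
            (ϱ (appRows h xs)).untopD 0 + cst := by
        intro h hh
        obtain ⟨q, hq⟩ := WithTop.ne_top_iff_exists.mp (hfin h hh)
        rw [show (fun w => ϱ w + (cst : WithTop ℚ)) (appRows h xs) =
          ϱ (appRows h xs) + (cst : WithTop ℚ) from rfl, ← hq, ← WithTop.coe_add,
          WithTop.untopD_coe, WithTop.untopD_coe]
      have hq := hP2 xs hxs'
      rw [wSum_eq_coe ω ϱ xs hfin] at hq
      rw [show (0 : WithTop ℚ) = ((0 : ℚ) : WithTop ℚ) from rfl, WithTop.coe_le_coe] at hq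
      rw [wSum_eq_coe ω _ xs hfin']
      rw [show (0 : WithTop ℚ) = ((0 : ℚ) : WithTop ℚ) from rfl, WithTop.coe_le_coe]
      have hzero : ∑ h ∈ Finset.univ.filter (fun h : Op D k => ω h ≠ 0), ω h = 0 := by
        rw [Finset.sum_filter_ne_zero]
        exact hsum
      have : ∑ h ∈ Finset.univ.filter (fun h : Op D k => ω h ≠ 0),
          ω h * ((fun w => ϱ w + (cst : WithTop ℚ)) (appRows h xs)).untopD 0 =
          (∑ h ∈ Finset.univ.filter (fun h : Op D k => ω h ≠ 0),
            ω h * (ϱ (appRows h xs)).untopD 0) +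
          cst * ∑ h ∈ Finset.univ.filter (fun h : Op D k => ω h ≠ 0), ω h := by
        rw [Finset.mul_sum, ← Finset.sum_add_distrib]
        refine Finset.sum_congr rfl fun h hh => ?_
        rw [hval h (Finset.mem_filter.mp hh).2]
        ring
      rw [this, hzero, mul_zero, add_zero]
      exact hq

private lemma good_sub {Γ : VLang D} {k : ℕ} {ω : Op D k → ℚ} (hω : ω ∈ wPol Γ k) :
    Γ ⊆ GoodSet ω := by
  intro p hp
  exact ⟨fun h hh => hω.1.support_mem h hh p hp, fun xs hxs => hω.2 p hp xs hxs⟩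

private lemma wRelClo_subset_good {Γ : VLang D} {k : ℕ} {ω : Op D k → ℚ}
    (hω : ω ∈ wPol Γ k) : wRelClo Γ ⊆ GoodSet ω := by
  intro p hp
  exact Set.mem_sInter.mp hp (GoodSet ω)
    ⟨good_sub hω, good_isWClosed ω hω.1.sum_zero hω.1.neg_imp_proj⟩

/-- Balance of weighted polymorphisms at every column, derived from the unary cost
functions in `Γ`. -/
private lemma balance_col {Γ : VLang D}
    (hall : ∀ ϱ : CostF D 1, (⟨1, ϱ⟩ : Σ r : ℕ, CostF D r) ∈ Γ)
    {k : ℕ} {ω : Op D k → ℚ} (hω : ω ∈ wPol Γ k) (c : Fin k → D) (a : D) :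
    ∑ h ∈ Finset.univ.filter (fun h : Op D k => ω h ≠ 0),
      ω h * (if h c = a then (1 : ℚ) else 0) = 0 := by
  classical
  have key : ∀ ε : ℚ, ∑ h ∈ Finset.univ.filter (fun h : Op D k => ω h ≠ 0),
      ω h * (if h c = a then ε else 0) ≤ 0 := by
    intro ε
    set μ : CostF D 1 := fun z => ((if z 0 = a then ε else 0 : ℚ) : WithTop ℚ) with hμ
    have hm := hω.2 ⟨1, μ⟩ (hall μ) (fun i _ => c i)
      (fun i => by simp [Feas, hμ])
    have hfin : ∀ h : Op D k, ω h ≠ 0 →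
        μ (appRows h (fun i _ => c i)) ≠ ⊤ := by
      intro h _
      simp [hμ]
    rw [wSum_eq_coe ω μ _ hfin] at hm
    rw [show (0 : WithTop ℚ) = ((0 : ℚ) : WithTop ℚ) from rfl, WithTop.coe_le_coe] at hm
    have hval : ∀ h : Op D k,
        ((μ (appRows h (fun i _ => c i))).untopD 0 : ℚ) = (if h c = a then ε else 0) := by
      intro h
      have : μ (appRows h (fun i _ => c i)) =
          ((if h c = a then ε else 0 : ℚ) : WithTop ℚ) := rfl
      rw [this, WithTop.untopD_coe]
    calc ∑ h ∈ Finset.univ.filter (fun h : Op D k => ω h ≠ 0),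
          ω h * (if h c = a then ε else 0)
        = ∑ h ∈ Finset.univ.filter (fun h : Op D k => ω h ≠ 0),
            ω h * (μ (appRows h (fun i _ => c i))).untopD 0 :=
          Finset.sum_congr rfl fun h _ => by rw [hval h]
      _ ≤ 0 := hm
  have h1 := key 1
  have h2 := key (-1)
  have h2' : -(∑ h ∈ Finset.univ.filter (fun h : Op D k => ω h ≠ 0),
      ω h * (if h c = a then (1 : ℚ) else 0)) ≤ 0 := by
    rw [← Finset.sum_neg_distrib]
    calc ∑ h ∈ Finset.univ.filter (fun h : Op D k => ω h ≠ 0),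
          -(ω h * (if h c = a then (1 : ℚ) else 0))
        = ∑ h ∈ Finset.univ.filter (fun h : Op D k => ω h ≠ 0),
            ω h * (if h c = a then (-1 : ℚ) else 0) := by
          refine Finset.sum_congr rfl fun h _ => ?_
          split <;> ring
      _ ≤ 0 := h2
  linarith

/-- Support operations of a weighted polymorphism are conservative on two-element subsets. -/
private lemma conservative_pair {Γ : VLang D}
    (hall : ∀ ϱ : CostF D 1, (⟨1, ϱ⟩ : Σ r : ℕ, CostF D r) ∈ Γ)
    {k : ℕ} {h : Op D k} (hh : h ∈ Pol Γ k) {x y : D} (c : Fin k → D)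
    (hc : ∀ i, c i = x ∨ c i = y) : h c = x ∨ h c = y := by
  classical
  set δ : CostF D 1 := fun z => if z 0 = x ∨ z 0 = y then (0 : WithTop ℚ) else ⊤ with hδ
  have hpoly := hh ⟨1, δ⟩ (hall δ) (fun i _ => c i)
    (fun i => by
      simp only [Feas, Set.mem_setOf_eq, hδ]
      rcases hc i with h1 | h1 <;> simp [h1])
  simp only [Feas, Set.mem_setOf_eq, hδ] at hpoly
  by_contra hcon
  push_neg at hcon
  have : appRows h (fun i (_ : Fin 1) => c i) = fun _ => h c := rfl
  rw [this] at hpoly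
  simp [hcon.1, hcon.2] at hpoly

end Statement11Aux


section Statement11Main

open Finset

set_option linter.unusedSectionVars false

variable {D : Type} [Fintype D] [DecidableEq D]

/-- The column with value `y` at position `i` and `x` elsewhere. -/
private def colO (x y : D) {k : ℕ} (i : Fin k) : Fin k → D :=
  fun t => if t = i then y else x

private lemma main_aux (Γ : VLang D)
    (hall : ∀ ϱ : CostF D 1, (⟨1, ϱ⟩ : Σ r : ℕ, CostF D r) ∈ Γ)
    (hcyc : ∃ k : ℕ, 1 < k ∧ ∃ f ∈ PolPlus Γ k, Idem f ∧ CyclicOp f)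
    (x y : D) (hxy : x ≠ y) (ϱ : CostF D 2)
    (hmem : (⟨2, ϱ⟩ : Σ r : ℕ, CostF D r) ∈ wRelClo Γ)
    (hxyf : ϱ ![x, y] ≠ ⊤) (hyxf : ϱ ![y, x] ≠ ⊤)
    (hlt : ϱ ![x, y] + ϱ ![y, x] < ϱ ![x, x] + ϱ ![y, y])
    (hxxf : ϱ ![x, x] ≠ ⊤) : False := by
  classical
  obtain ⟨k, hk, f, hfPP, hfI, hfC⟩ := hcyc
  -- basic facts about the rotation
  have hrotNe : ∀ i : Fin k, finRotate k i ≠ i := by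
    obtain ⟨k', rfl⟩ : ∃ k', k = k' + 2 := ⟨k - 2, by omega⟩
    intro i
    rw [finRotate_succ_apply]
    intro hcon
    have h1 : i + 1 = i + 0 := by rw [add_zero]; exact hcon
    have h2 : (1 : Fin (k' + 2)) = 0 := add_left_cancel h1
    have h3 := congrArg Fin.val h2
    simp [Fin.val_one] at h3
  have hcompRot : ∀ i : Fin k,
      (colO x y (finRotate k i)) ∘ ⇑(finRotate k) = colO x y i := by
    intro i
    funext t
    simp only [Function.comp_apply, colO]
    by_cases ht : t = i
    · rw [if_pos (by rw [ht]), if_pos ht]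
    · rw [if_neg (fun hc => ht ((finRotate k).injective hc)), if_neg ht]
  -- dispose of the case that `f` is a projection: projections are not cyclic
  rcases hfPP with hproj | ⟨ω, hω, hωf⟩
  · obtain ⟨m, rfl⟩ := hproj
    have h1 : proj D m (colO x y m) = y := by simp [proj, colO]
    have h2 := hfC (colO x y m)
    rw [h1] at h2
    have h3 : proj D m (colO x y m ∘ ⇑(finRotate k)) = x := by
      show (colO x y m ∘ ⇑(finRotate k)) m = x
      simp only [Function.comp_apply, colO]
      rw [if_neg (hrotNe m)]
    rw [h3] at h2
    exact hxy h2.symm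
  -- now `f` has positive weight in `ω ∈ wPol Γ k`
  obtain ⟨hP1, hP2⟩ := wRelClo_subset_good hω hmem
  have hrowsF : ∀ i j : Fin k, i ≠ j → ∀ t,
      (![colO x y i t, colO x y j t]) ∈ Feas ϱ := by
    intro i j hij t
    simp only [Feas, Set.mem_setOf_eq, colO]
    by_cases ht1 : t = i
    · subst ht1
      rw [if_pos rfl, if_neg (fun hc : t = j => hij (hc ▸ rfl))]
      exact hyxf
    · by_cases ht2 : t = j
      · subst ht2
        rw [if_neg ht1, if_pos rfl]
        exact hxyf
      · rw [if_neg ht1, if_neg ht2]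
        exact hxxf
  have happ : ∀ (h : Op D k) (i j : Fin k),
      appRows h (fun t => ![colO x y i t, colO x y j t]) =
        ![h (colO x y i), h (colO x y j)] := by
    intro h i j
    funext m
    fin_cases m <;> rfl
  -- NBY : no positively weighted operation outputs `y` on two distinct one-`y` columns
  have NBY : ∀ i j : Fin k, i ≠ j → ∀ h : Op D k, 0 < ω h →
      ¬(h (colO x y i) = y ∧ h (colO x y j) = y) := by
    intro i j hij h hpos hcon
    obtain ⟨hyi, hyj⟩ := hcon
    have hne : ω h ≠ 0 := ne_of_gt hpos
    by_cases hyyT : ϱ ![y, y] = ⊤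
    · have hfeas := hP1 h hne (fun t => ![colO x y i t, colO x y j t]) (hrowsF i j hij)
      rw [show appRows h (fun t => ![colO x y i t, colO x y j t]) = ![y, y] by
        rw [happ h i j, hyi, hyj]] at hfeas
      exact hfeas hyyT
    · -- both diagonal values finite: use the improvement inequality
      obtain ⟨qxx, hqxx⟩ := WithTop.ne_top_iff_exists.mp hxxf
      obtain ⟨qyy, hqyy⟩ := WithTop.ne_top_iff_exists.mp hyyT
      obtain ⟨qxy, hqxy⟩ := WithTop.ne_top_iff_exists.mp hxyf
      obtain ⟨qyx, hqyx⟩ := WithTop.ne_top_iff_exists.mp hyxf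
      have hΔ : 0 < qxx + qyy - qxy - qyx := by
        rw [← hqxy, ← hqyx, ← hqxx, ← hqyy, ← WithTop.coe_add, ← WithTop.coe_add,
          WithTop.coe_lt_coe] at hlt
        linarith
      have hBv : ∀ h' : Op D k, ω h' ≠ 0 → ∀ i' : Fin k,
          h' (colO x y i') = x ∨ h' (colO x y i') = y := by
        intro h' hne' i'
        refine conservative_pair hall (hω.1.support_mem h' hne') _ (fun t => ?_)
        by_cases ht : t = i' <;> simp [colO, ht]
      have hvalue : ∀ u v : D, (u = x ∨ u = y) → (v = x ∨ v = y) →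
          ϱ ![u, v] ≠ ⊤ ∧
          (ϱ ![u, v]).untopD 0 =
            qxx + (qyx - qxx) * (if u = y then (1 : ℚ) else 0)
              + (qxy - qxx) * (if v = y then (1 : ℚ) else 0)
              + (qxx + qyy - qxy - qyx) *
                ((if u = y then (1 : ℚ) else 0) * (if v = y then (1 : ℚ) else 0)) := by
        rintro u v (rfl | rfl) (rfl | rfl)
        · exact ⟨hxxf, by rw [← hqxx, WithTop.untopD_coe, if_neg hxy]; ring⟩
        · exact ⟨hxyf, by rw [← hqxy, WithTop.untopD_coe, if_neg hxy, if_pos rfl]; ring⟩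
        · exact ⟨hyxf, by rw [← hqyx, WithTop.untopD_coe, if_pos rfl, if_neg hxy]; ring⟩
        · exact ⟨hyyT, by rw [← hqyy, WithTop.untopD_coe, if_pos rfl]; ring⟩
      have hfin : ∀ h' : Op D k, ω h' ≠ 0 →
          ϱ (appRows h' (fun t => ![colO x y i t, colO x y j t])) ≠ ⊤ := by
        intro h' hne'
        rw [happ h' i j]
        exact (hvalue _ _ (hBv h' hne' i) (hBv h' hne' j)).1
      have hw := hP2 (fun t => ![colO x y i t, colO x y j t]) (hrowsF i j hij)
      rw [wSum_eq_coe ω ϱ _ hfin] at hw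
      rw [show (0 : WithTop ℚ) = ((0 : ℚ) : WithTop ℚ) from rfl, WithTop.coe_le_coe] at hw
      have e : ∀ h' ∈ Finset.univ.filter (fun h' : Op D k => ω h' ≠ 0),
          ω h' * (ϱ (appRows h' (fun t => ![colO x y i t, colO x y j t]))).untopD 0 =
            qxx * ω h'
            + (qyx - qxx) * (ω h' * (if h' (colO x y i) = y then (1 : ℚ) else 0))
            + (qxy - qxx) * (ω h' * (if h' (colO x y j) = y then (1 : ℚ) else 0))
            + (qxx + qyy - qxy - qyx) * (ω h' *
                ((if h' (colO x y i) = y then (1 : ℚ) else 0) *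
                 (if h' (colO x y j) = y then (1 : ℚ) else 0))) := by
        intro h' hh'
        have hne' := (Finset.mem_filter.mp hh').2
        rw [happ h' i j, (hvalue _ _ (hBv h' hne' i) (hBv h' hne' j)).2]
        ring
      rw [Finset.sum_congr rfl e] at hw
      simp only [Finset.sum_add_distrib, ← Finset.mul_sum] at hw
      have hz0 : ∑ h' ∈ Finset.univ.filter (fun h' : Op D k => ω h' ≠ 0), ω h' = 0 := by
        rw [Finset.sum_filter_ne_zero]
        exact hω.1.sum_zero
      rw [hz0, balance_col hall hω (colO x y i) y, balance_col hall hω (colO x y j) y,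
        mul_zero, mul_zero, mul_zero, zero_add, zero_add, zero_add] at hw
      -- hw : Δ * S3 ≤ 0 with Δ > 0, so S3 ≤ 0
      have hS3 : (∑ h' ∈ Finset.univ.filter (fun h' : Op D k => ω h' ≠ 0),
          ω h' * ((if h' (colO x y i) = y then (1 : ℚ) else 0) *
                  (if h' (colO x y j) = y then (1 : ℚ) else 0))) ≤ 0 := by
        by_contra hc
        push_neg at hc
        nlinarith
      have hterm_nonneg : ∀ h' ∈ Finset.univ.filter (fun h' : Op D k => ω h' ≠ 0),
          0 ≤ ω h' * ((if h' (colO x y i) = y then (1 : ℚ) else 0) *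
                      (if h' (colO x y j) = y then (1 : ℚ) else 0)) := by
        intro h' hh'
        rcases lt_trichotomy (ω h') 0 with hl | h0 | hg
        · obtain ⟨m, rfl⟩ := hω.1.neg_imp_proj h' hl
          have hzero : (if proj D m (colO x y i) = y then (1 : ℚ) else 0) *
              (if proj D m (colO x y j) = y then (1 : ℚ) else 0) = 0 := by
            by_cases hmi : m = i
            · have : proj D m (colO x y j) = x := by
                show colO x y j m = x
                simp only [colO]
                rw [if_neg (fun hc : m = j => hij (hmi ▸ hc ▸ rfl))]
              rw [this, if_neg hxy, mul_zero]
            · have : proj D m (colO x y i) = x := by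
                show colO x y i m = x
                simp only [colO]
                rw [if_neg hmi]
              rw [this, if_neg hxy, zero_mul]
          rw [hzero, mul_zero]
        · exact absurd h0 (Finset.mem_filter.mp hh').2
        · refine mul_nonneg (le_of_lt hg) (mul_nonneg ?_ ?_) <;> split <;> norm_num
      have hf_le := Finset.single_le_sum hterm_nonneg
        (Finset.mem_filter.mpr ⟨Finset.mem_univ h, hne⟩)
      rw [hyi, hyj, if_pos rfl, mul_one, mul_one] at hf_le
      linarith
  -- values of `f` on one-`y` columns, via cyclicity
  have hrotVal : ∀ i : Fin k, f (colO x y (finRotate k i)) = f (colO x y i) := by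
    intro i
    have hstep := hfC (colO x y (finRotate k i))
    rw [hcompRot i] at hstep
    exact hstep
  have hfB : ∀ i : Fin k, f (colO x y i) = x ∨ f (colO x y i) = y := by
    intro i
    refine conservative_pair hall (hω.1.support_mem f (ne_of_gt hωf)) _ (fun t => ?_)
    by_cases ht : t = i <;> simp [colO, ht]
  have FX : ∀ i : Fin k, f (colO x y i) ≠ y := by
    intro i hy
    have hy2 : f (colO x y (finRotate k i)) = y := by rw [hrotVal i, hy]
    exact NBY (finRotate k i) i (hrotNe i) f hωf ⟨hy2, hy⟩
  -- final counting argument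
  have hz0 : ∑ h ∈ Finset.univ.filter (fun h : Op D k => ω h ≠ 0), ω h = 0 := by
    rw [Finset.sum_filter_ne_zero]
    exact hω.1.sum_zero
  have hsum1 : ∑ h ∈ Finset.univ.filter (fun h : Op D k => ω h ≠ 0),
      ω h * (∑ i : Fin k, if h (colO x y i) = y then (1 : ℚ) else 0) = 0 := by
    have e : ∀ h ∈ Finset.univ.filter (fun h : Op D k => ω h ≠ 0),
        ω h * (∑ i : Fin k, if h (colO x y i) = y then (1 : ℚ) else 0) =
          ∑ i : Fin k, ω h * (if h (colO x y i) = y then (1 : ℚ) else 0) :=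
      fun h _ => Finset.mul_sum _ _ _
    rw [Finset.sum_congr rfl e, Finset.sum_comm]
    exact Finset.sum_eq_zero fun i _ => balance_col hall hω (colO x y i) y
  have hseq : ∑ h ∈ Finset.univ.filter (fun h : Op D k => ω h ≠ 0),
      ω h * ((∑ i : Fin k, if h (colO x y i) = y then (1 : ℚ) else 0) - 1) = 0 := by
    simp only [mul_sub, mul_one]
    rw [Finset.sum_sub_distrib, hsum1, hz0, sub_zero]
  have hterms : ∀ h ∈ Finset.univ.filter (fun h : Op D k => ω h ≠ 0),
      ω h * ((∑ i : Fin k, if h (colO x y i) = y then (1 : ℚ) else 0) - 1) ≤ 0 := by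
    intro h hh
    rcases lt_trichotomy (ω h) 0 with hl | h0 | hg
    · obtain ⟨m, rfl⟩ := hω.1.neg_imp_proj h hl
      have hone : (∑ i : Fin k, if proj D m (colO x y i) = y then (1 : ℚ) else 0) = 1 := by
        have e : ∀ i : Fin k, (if proj D m (colO x y i) = y then (1 : ℚ) else 0) =
            (if i = m then (1 : ℚ) else 0) := by
          intro i
          by_cases him : i = m
          · have : proj D m (colO x y i) = y := by
              show colO x y i m = y
              simp only [colO]
              rw [if_pos him.symm]
            rw [this, if_pos rfl, if_pos him]
          · have : proj D m (colO x y i) = x := by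
              show colO x y i m = x
              simp only [colO]
              rw [if_neg (fun hc : m = i => him hc.symm)]
            rw [this, if_neg hxy, if_neg him]
        rw [Finset.sum_congr rfl fun i _ => e i]
        simp
      rw [hone, sub_self, mul_zero]
    · exact absurd h0 (Finset.mem_filter.mp hh).2
    · have hle1 : (∑ i : Fin k, if h (colO x y i) = y then (1 : ℚ) else 0) ≤ 1 := by
        by_cases hex : ∃ i : Fin k, h (colO x y i) = y
        · obtain ⟨i0, hi0⟩ := hex
          have hcomp : ∀ i : Fin k, (if h (colO x y i) = y then (1 : ℚ) else 0) ≤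
              (if i = i0 then (1 : ℚ) else 0) := by
            intro i
            by_cases hii : i = i0
            · subst hii
              rw [if_pos rfl]
              split <;> norm_num
            · rw [if_neg hii]
              by_cases hhy : h (colO x y i) = y
              · exact absurd ⟨hhy, hi0⟩ (NBY i i0 hii h hg)
              · rw [if_neg hhy]
          calc (∑ i : Fin k, if h (colO x y i) = y then (1 : ℚ) else 0)
              ≤ ∑ i : Fin k, (if i = i0 then (1 : ℚ) else 0) :=
                Finset.sum_le_sum fun i _ => hcomp i
            _ = 1 := by simp
        · push_neg at hex
          rw [Finset.sum_eq_zero fun i _ => if_neg (hex i)]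
          norm_num
      exact mul_nonpos_of_nonneg_of_nonpos (le_of_lt hg) (by linarith)
  have hfterm : ω f * ((∑ i : Fin k, if f (colO x y i) = y then (1 : ℚ) else 0) - 1) < 0 := by
    rw [Finset.sum_eq_zero fun i _ => if_neg (FX i)]
    nlinarith
  have hmemf : f ∈ Finset.univ.filter (fun h : Op D k => ω h ≠ 0) :=
    Finset.mem_filter.mpr ⟨Finset.mem_univ f, ne_of_gt hωf⟩
  have hslt : ∑ h ∈ Finset.univ.filter (fun h : Op D k => ω h ≠ 0),
      ω h * ((∑ i : Fin k, if h (colO x y i) = y then (1 : ℚ) else 0) - 1) < 0 := by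
    have := Finset.sum_lt_sum hterms ⟨f, hmemf, hfterm⟩
    simpa using this
  exact absurd hseq (ne_of_lt hslt)

end Statement11Main

/-- If `Γ` contains all unary cost functions and `Pol⁺(Γ)` contains an
idempotent cyclic operation, then for no two-element subset `{x,y}` of `D` is there a binary
cost function `ϱ ∈ wRelClo(Γ)` with `(x,y),(y,x)` feasible,
`ϱ(x,x)+ϱ(y,y) > ϱ(x,y)+ϱ(y,x)`, and at least one of `(x,x),(y,y)` feasible. -/
theorem no_soft_violating_binary_costF {D : Type} [Fintype D] [DecidableEq D] [Nonempty D]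
    (Γ : VLang D)
    (hall : ∀ ϱ : CostF D 1, (⟨1, ϱ⟩ : Σ r : ℕ, CostF D r) ∈ Γ)
    (hcyc : ∃ k : ℕ, 1 < k ∧ ∃ f ∈ PolPlus Γ k, Idem f ∧ CyclicOp f) :
    ∀ x y : D, x ≠ y →
      ¬ ∃ ϱ : CostF D 2, (⟨2, ϱ⟩ : Σ r : ℕ, CostF D r) ∈ wRelClo Γ ∧
          ϱ ![x, y] ≠ ⊤ ∧ ϱ ![y, x] ≠ ⊤ ∧
          ϱ ![x, y] + ϱ ![y, x] < ϱ ![x, x] + ϱ ![y, y] ∧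
          (ϱ ![x, x] ≠ ⊤ ∨ ϱ ![y, y] ≠ ⊤) := by
  intro x y hxy
  rintro ⟨ϱ, hmem, hxyf, hyxf, hlt, hfeas⟩
  rcases hfeas with hxxf | hyyf
  · exact main_aux Γ hall hcyc x y hxy ϱ hmem hxyf hyxf hlt hxxf
  · have hlt' : ϱ ![y, x] + ϱ ![x, y] < ϱ ![y, y] + ϱ ![x, x] := by
      rw [add_comm (ϱ ![y, x]), add_comm (ϱ ![y, y])]
      exact hlt
    exact main_aux Γ hall hcyc y x (Ne.symm hxy) ϱ hmem hyxf hxyf hlt' hyyf
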